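/- Let T be a positive integer, let v : Fin T → ℂ, and let C = Matrix.circulant v. Then the nuclear norm of C equals the ℓ1 norm of the discrete Fourier transform of v: the sum over k ∈ Fin T of the square roots of the eigenvalues of the Hermitian positive semidefinite matrix Cᴴ · C equals ∑_{k=0}^{T−1} |∑_{m=0}^{T−1} v(m)·exp(−2πi·m·k/T)|. That is, ‖C(v)‖_* = ‖DFT(v)‖_1. -/

import Mathlib

open Matrix Complex
open scoped Polynomial
open Polynomial Finset

lemma myPow_eq_of_mod_eq {ζ : ℂ} {T : ℕ} (h : ζ ^ T = 1) {a b : ℕ} (hab : a % T = b % T) :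
    ζ ^ a = ζ ^ b := by
  rw [pow_eq_pow_mod a h, pow_eq_pow_mod b h, hab]

lemma myCirculant_mul_F {T : ℕ} [NeZero T] (w : Fin T → ℂ) {ζ ω : ℂ}
    (hζT : ζ ^ T = 1) (hζω : ζ * ω = 1) :
    Matrix.circulant w * Matrix.of (fun j k : Fin T => ζ ^ (j.val * k.val)) =
      Matrix.of (fun j k : Fin T => ζ ^ (j.val * k.val)) *
        Matrix.diagonal (fun k => ∑ m : Fin T, w m * ω ^ (m.val * k.val)) := by
  have hζ0 : ζ ≠ 0 := left_ne_zero_of_mul_eq_one hζω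
  ext i k
  rw [Matrix.mul_diagonal, Matrix.mul_apply]
  simp only [Matrix.circulant_apply, Matrix.of_apply]
  rw [← Equiv.sum_comp (Equiv.subLeft i) (fun j => w (i - j) * ζ ^ (j.val * k.val))]
  simp only [Equiv.subLeft_apply, sub_sub_cancel]
  rw [Finset.mul_sum]
  refine Finset.sum_congr rfl fun m _ => ?_
  have key : ζ ^ ((i - m).val * k.val) = ζ ^ (i.val * k.val) * ω ^ (m.val * k.val) := by
    have hc : ζ ^ (m.val * k.val) ≠ 0 := pow_ne_zero _ hζ0
    apply mul_right_cancel₀ hc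
    have h1 : i.val = ((i - m).val + m.val) % T := by
      have h2 : ((i - m) + m : Fin T) = i := sub_add_cancel i m
      have h2' := congrArg Fin.val h2
      rw [Fin.val_add] at h2'
      exact h2'.symm
    have hmod : ((i - m).val * k.val + m.val * k.val) % T = (i.val * k.val) % T := by
      have h3 : ((i - m).val + m.val) % T = i.val % T := by
        rw [← h1, Nat.mod_eq_of_lt i.isLt]
      have h4 := Nat.ModEq.mul_right k.val (h3 : ((i - m).val + m.val) ≡ i.val [MOD T])
      rw [add_mul] at h4; exact h4
    calc ζ ^ ((i - m).val * k.val) * ζ ^ (m.val * k.val)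
        = ζ ^ ((i - m).val * k.val + m.val * k.val) := (pow_add ζ _ _).symm
      _ = ζ ^ (i.val * k.val) := myPow_eq_of_mod_eq hζT hmod
      _ = ζ ^ (i.val * k.val) * ((ζ * ω) ^ (m.val * k.val)) := by rw [hζω, one_pow, mul_one]
      _ = ζ ^ (i.val * k.val) * ω ^ (m.val * k.val) * ζ ^ (m.val * k.val) := by
          rw [mul_pow]; ring
  rw [key]; ring

lemma myCharpoly_conj {n : Type*} [DecidableEq n] [Fintype n] (P A : Matrix n n ℂ)
    (hP : IsUnit P.det) : (P * A * P⁻¹).charpoly = A.charpoly := by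
  have h1 : P * P⁻¹ = 1 := Matrix.mul_nonsing_inv P hP
  set f : Matrix n n ℂ → Matrix n n ℂ[X] := fun M => M.map (Polynomial.C : ℂ → ℂ[X]) with hf
  have hPQ : f P * f P⁻¹ = 1 := by
    rw [hf]; dsimp only
    rw [← Matrix.map_mul, h1, Matrix.map_one _ (map_zero _) (map_one _)]
  have hcm : charmatrix (P * A * P⁻¹) = f P * charmatrix A * f P⁻¹ := by
    unfold charmatrix
    simp only [RingHom.mapMatrix_apply]
    have hsc : f P * Matrix.scalar n (X : ℂ[X]) = Matrix.scalar n (X : ℂ[X]) * f P :=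
      (Matrix.scalar_commute (X : ℂ[X]) (fun r' => Commute.all _ _) (f P)).symm
    rw [mul_sub, sub_mul]
    congr 1
    · rw [hsc, mul_assoc, hPQ, mul_one]
    · show (P * A * P⁻¹).map Polynomial.C = f P * (A.map Polynomial.C) * f P⁻¹
      rw [hf]; dsimp only; rw [Matrix.map_mul, Matrix.map_mul]
  rw [Matrix.charpoly, Matrix.charpoly, hcm, Matrix.det_mul, Matrix.det_mul]
  have : (f P).det * (f P⁻¹).det = 1 := by rw [← Matrix.det_mul, hPQ, Matrix.det_one]
  calc (f P).det * (charmatrix A).det * (f P⁻¹).det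
      = (charmatrix A).det * ((f P).det * (f P⁻¹).det) := by ring
    _ = (charmatrix A).det := by rw [this, mul_one]

lemma myCharpoly_diagonal {n : Type*} [DecidableEq n] [Fintype n] (d : n → ℂ) :
    (Matrix.diagonal d).charpoly = ∏ i, (X - C (d i)) := by
  have hcm : charmatrix (Matrix.diagonal d) = Matrix.diagonal (fun i => X - C (d i)) := by
    ext i j
    rcases eq_or_ne i j with rfl | h
    · simp
    · rw [charmatrix_apply_ne _ _ _ h, Matrix.diagonal_apply_ne _ h, Matrix.diagonal_apply_ne _ h,
        map_zero, neg_zero]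
  rw [Matrix.charpoly, hcm, Matrix.det_diagonal]

/-- **Convolution nuclear norm equals Fourier ℓ1 norm.** For a positive integer `T`
and `v : Fin T → ℂ`, the nuclear norm of the circulant matrix `C = Matrix.circulant v`
(the sum of the square roots of the eigenvalues of the Hermitian matrix `Cᴴ · C`)
equals the ℓ1 norm of the DFT of `v`. -/
theorem nuclearNorm_circulant_eq_l1_dft (T : ℕ) (hT : 0 < T) (v : Fin T → ℂ)
    (hA : ((Matrix.circulant v)ᴴ * Matrix.circulant v).IsHermitian) :
    ∑ k : Fin T, Real.sqrt (hA.eigenvalues k) =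
      ∑ k : Fin T,
        ‖(∑ m : Fin T,
            v m * Complex.exp (-(2 * (Real.pi : ℂ) * Complex.I * ((m : ℕ) : ℂ) * ((k : ℕ) : ℂ) / (T : ℂ))))‖ := by
  haveI : NeZero T := ⟨hT.ne'⟩
  classical
  set ζ : ℂ := Complex.exp (2 * ↑Real.pi * Complex.I / T) with hζdef
  set ω : ℂ := Complex.exp (-(2 * ↑Real.pi * Complex.I) / T) with hωdef
  have hζω : ζ * ω = 1 := by
    rw [hζdef, hωdef, ← Complex.exp_add, neg_div, add_neg_cancel, Complex.exp_zero]
  have hζ0 : ζ ≠ 0 := left_ne_zero_of_mul_eq_one hζω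
  have hω0 : ω ≠ 0 := right_ne_zero_of_mul_eq_one hζω
  have hprim : IsPrimitiveRoot ζ T := Complex.isPrimitiveRoot_exp T hT.ne'
  have hζT : ζ ^ T = 1 := hprim.pow_eq_one
  have hωT : ω ^ T = 1 := by
    have : (ζ * ω) ^ T = 1 := by rw [hζω, one_pow]
    rw [mul_pow, hζT, one_mul] at this; exact this
  have hsζ : starRingEnd ℂ ζ = ω := by
    rw [hζdef, hωdef, ← Complex.exp_conj]
    congr 1
    simp [map_div₀, Complex.conj_I, map_ofNat]
  have hsω : starRingEnd ℂ ω = ζ := by rw [← hsζ, Complex.conj_conj]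
  set F : Matrix (Fin T) (Fin T) ℂ := Matrix.of (fun j k : Fin T => ζ ^ (j.val * k.val)) with hFdef
  set lam : Fin T → ℂ := fun k => ∑ m : Fin T, v m * ω ^ (m.val * k.val) with hlamdef
  have hCF : Matrix.circulant v * F = F * Matrix.diagonal lam := myCirculant_mul_F v hζT hζω
  set w : Fin T → ℂ := fun i => starRingEnd ℂ (v (-i)) with hwdef
  have hCH : (Matrix.circulant v)ᴴ = Matrix.circulant w := by
    rw [Matrix.conjTranspose_circulant]; rfl
  have hCHF : Matrix.circulant w * F = F * Matrix.diagonal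
      (fun k => ∑ m : Fin T, w m * ω ^ (m.val * k.val)) := myCirculant_mul_F w hζT hζω
  have hpowneg : ∀ (m k : Fin T), ω ^ ((-m : Fin T).val * k.val) = ζ ^ (m.val * k.val) := by
    intro m k
    have hc : ω ^ (m.val * k.val) ≠ 0 := pow_ne_zero _ hω0
    apply mul_right_cancel₀ hc
    have h2 := congrArg Fin.val (neg_add_cancel m)
    rw [Fin.val_add] at h2
    have hmod : (((-m : Fin T).val + m.val) * k.val) % T = (0 * k.val) % T := by
      have h3 : ((-m : Fin T).val + m.val) % T = 0 % T := by
        rw [h2]; simp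
      exact Nat.ModEq.mul_right k.val h3
    calc ω ^ ((-m : Fin T).val * k.val) * ω ^ (m.val * k.val)
        = ω ^ (((-m : Fin T).val + m.val) * k.val) := by rw [add_mul, pow_add]
      _ = ω ^ (0 * k.val) := myPow_eq_of_mod_eq hωT hmod
      _ = 1 := by rw [zero_mul, pow_zero]
      _ = (ζ * ω) ^ (m.val * k.val) := by rw [hζω, one_pow]
      _ = ζ ^ (m.val * k.val) * ω ^ (m.val * k.val) := mul_pow ζ ω _
  have hmu : (fun k => ∑ m : Fin T, w m * ω ^ (m.val * k.val))
      = fun k => starRingEnd ℂ (lam k) := by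
    funext k
    rw [hlamdef]
    dsimp only
    rw [map_sum]
    rw [← Equiv.sum_comp (Equiv.neg (Fin T)) (fun m : Fin T => w m * ω ^ (m.val * k.val))]
    refine Finset.sum_congr rfl fun m _ => ?_
    simp only [Equiv.neg_apply, hwdef, neg_neg]
    rw [_root_.map_mul, map_pow, hsω, hpowneg m k]
  have hCHC : ((Matrix.circulant v)ᴴ * Matrix.circulant v) * F
      = F * Matrix.diagonal (fun k => starRingEnd ℂ (lam k) * lam k) := by
    rw [mul_assoc, hCF, ← mul_assoc, hCH, hCHF, hmu, mul_assoc, Matrix.diagonal_mul_diagonal]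
  have hFdet : IsUnit F.det := by
    have hFvan : F = Matrix.vandermonde (fun j : Fin T => ζ ^ (j.val)) := by
      ext j k; simp [Matrix.vandermonde_apply, pow_mul, hFdef]
    rw [hFvan, isUnit_iff_ne_zero, Ne, Matrix.det_vandermonde_eq_zero_iff]
    rintro ⟨i, j, hij, hne⟩
    exact hne (Fin.ext (hprim.pow_inj i.isLt j.isLt hij))
  have hAeq : (Matrix.circulant v)ᴴ * Matrix.circulant v
      = F * Matrix.diagonal (fun k => starRingEnd ℂ (lam k) * lam k) * F⁻¹ := by
    rw [← hCHC, mul_assoc, Matrix.mul_nonsing_inv F hFdet, mul_one]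
  have hcp1 : ((Matrix.circulant v)ᴴ * Matrix.circulant v).charpoly
      = ∏ k : Fin T, (X - C (starRingEnd ℂ (lam k) * lam k)) := by
    rw [hAeq, myCharpoly_conj _ _ hFdet, myCharpoly_diagonal]
  set U : Matrix (Fin T) (Fin T) ℂ := (hA.eigenvectorUnitary : Matrix (Fin T) (Fin T) ℂ) with hU
  have hUU : U * star U = 1 := Matrix.mem_unitaryGroup_iff.mp hA.eigenvectorUnitary.2
  have hUinv : U⁻¹ = star U := Matrix.inv_eq_right_inv hUU
  have hUdet : IsUnit U.det := by
    apply IsUnit.of_mul_eq_one (star U).det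
    rw [← Matrix.det_mul, hUU, Matrix.det_one]
  have hcp2 : ((Matrix.circulant v)ᴴ * Matrix.circulant v).charpoly
      = ∏ k : Fin T, (X - C ((hA.eigenvalues k : ℝ) : ℂ)) := by
    conv_lhs => rw [hA.spectral_theorem]
    rw [Unitary.conjStarAlgAut_apply, ← hU, ← hUinv, myCharpoly_conj _ _ hUdet, myCharpoly_diagonal]
    rfl
  have hms : (Finset.univ.val.map fun k : Fin T => ((hA.eigenvalues k : ℝ) : ℂ))
      = Finset.univ.val.map fun k : Fin T => starRingEnd ℂ (lam k) * lam k := by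
    have h := hcp2.symm.trans hcp1
    have e1 : ∀ (c : Fin T → ℂ), (∏ k : Fin T, (X - C (c k)))
        = ((Finset.univ.val.map c).map fun r : ℂ => X - C r).prod := by
      intro c; rw [Multiset.map_map]; rfl
    rw [e1, e1] at h
    have h2 := congrArg Polynomial.roots h
    rwa [Polynomial.roots_multiset_prod_X_sub_C, Polynomial.roots_multiset_prod_X_sub_C] at h2
  set f : ℂ → ℝ := fun z => Real.sqrt z.re with hfdef
  have e2 : ∀ (c : Fin T → ℂ), (∑ k : Fin T, f (c k))
      = ((Finset.univ.val.map c).map f).sum := by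
    intro c; rw [Multiset.map_map]; rfl
  have key : (∑ k : Fin T, f (((hA.eigenvalues k : ℝ) : ℂ)))
      = ∑ k : Fin T, f (starRingEnd ℂ (lam k) * lam k) := by
    rw [e2, e2, hms]
  calc ∑ k : Fin T, Real.sqrt (hA.eigenvalues k)
      = ∑ k : Fin T, f (((hA.eigenvalues k : ℝ) : ℂ)) := by
        refine Finset.sum_congr rfl fun k _ => ?_
        rw [hfdef]; simp
    _ = ∑ k : Fin T, f (starRingEnd ℂ (lam k) * lam k) := key
    _ = ∑ k : Fin T, ‖lam k‖ := by
        refine Finset.sum_congr rfl fun k _ => ?_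
        rw [hfdef]; dsimp only
        rw [mul_comm, Complex.mul_conj, Complex.ofReal_re, ← Complex.norm_def]
    _ = ∑ k : Fin T,
        ‖(∑ m : Fin T,
            v m * Complex.exp (-(2 * (Real.pi : ℂ) * Complex.I * ((m : ℕ) : ℂ) * ((k : ℕ) : ℂ) / (T : ℂ))))‖ := by
        refine Finset.sum_congr rfl fun k _ => ?_
        congr 1
        rw [hlamdef]
        refine Finset.sum_congr rfl fun m _ => ?_
        congr 1
        rw [hωdef, ← Complex.exp_nat_mul]
        congr 1
        push_cast
        ring
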